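/- Let d ≥ 1, n ≥ 2, k ≥ 1. The image α(RTM(ℤ^d,n,k)) of the average movement map equals the subgroup of (ℚ^d, +) generated by the vectors e_i/(k·n^j) for j ∈ ℕ and 1 ≤ i ≤ d, where e_i denotes the i-th standard basis vector. -/

import Mathlib

open MeasureTheory

/-- The shift action on configurations: `(shiftC v x) u = x (u - v)`. -/
def shiftC {d : ℕ} {A : Type*} (v : Fin d → ℤ) (x : (Fin d → ℤ) → A) : (Fin d → ℤ) → A :=
  fun u => x (u - v)

/-- The moving-head space `Σ^{ℤ^d} × Q × ℤ^d`. -/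
abbrev Head (d n k : ℕ) : Type :=
  ((Fin d → ℤ) → Fin n) × Fin k × (Fin d → ℤ)

/-- The moving-tape space `Σ^{ℤ^d} × Q`. -/
abbrev Tape (d n k : ℕ) : Type := ((Fin d → ℤ) → Fin n) × Fin k

/-- `T` is a moving-head `(ℤ^d,n,k)`-Turing machine. -/
def IsTM (d n k : ℕ) (T : Head d n k → Head d n k) : Prop :=
  ∃ (Fi Fo : Finset (Fin d → ℤ))
    (f : ((Fin d → ℤ) → Fin n) × Fin k → ((Fin d → ℤ) → Fin n) × Fin k × (Fin d → ℤ)),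
    (∀ (x y : (Fin d → ℤ) → Fin n) (q : Fin k),
        (∀ u ∈ Fi, x u = y u) → f (x, q) = f (y, q)) ∧
    ∀ (x : (Fin d → ℤ) → Fin n) (q : Fin k) (v : Fin d → ℤ),
      T (x, q, v) =
        ((fun u => if u - v ∈ Fo then (f (shiftC (-v) x, q)).1 (u - v) else x u),
         (f (shiftC (-v) x, q)).2.1,
         v + (f (shiftC (-v) x, q)).2.2)

/-- `T` is a reversible moving-head Turing machine. -/
def IsRTM (d n k : ℕ) (T : Head d n k → Head d n k) : Prop :=
  IsTM d n k T ∧ ∃ T' : Head d n k → Head d n k,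
    IsTM d n k T' ∧ T ∘ T' = id ∧ T' ∘ T = id

/-- The canonical epimorphism `Ψ` from moving-head machines to moving-tape machines:
`Ψ(T)(x,q) = (σ^{-v} y, r)` whenever `T (x,q,0) = (y,r,v)`. -/
def Psi (d n k : ℕ) (T : Head d n k → Head d n k) : Tape d n k → Tape d n k :=
  fun p =>
    (shiftC (-(T (p.1, p.2, 0)).2.2) (T (p.1, p.2, 0)).1, (T (p.1, p.2, 0)).2.1)

/-- `s` is a shift indicator of the moving-tape machine `T`. -/
def IsShiftIndicator (d n k : ℕ) (T : Tape d n k → Tape d n k)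
    (s : Tape d n k → (Fin d → ℤ)) : Prop :=
  Continuous s ∧
    ∃ F : Finset (Fin d → ℤ),
      ∀ (x : (Fin d → ℤ) → Fin n) (q : Fin k), ∀ u ∉ F,
        (T (x, q)).1 u = shiftC (s (x, q)) x u

-- cylinder sets are open
lemma isOpen_cyl (d n k : ℕ) (E : Finset (Fin d → ℤ)) (x₀ : (Fin d → ℤ) → Fin n) (q : Fin k) :
    IsOpen {y : Tape d n k | (∀ u ∈ E, y.1 u = x₀ u) ∧ y.2 = q} := by
  have : {y : Tape d n k | (∀ u ∈ E, y.1 u = x₀ u) ∧ y.2 = q}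
      = (Set.pi (↑E) (fun u => {x₀ u})) ×ˢ ({q} : Set (Fin k)) := by
    ext y
    simp only [Set.mem_setOf_eq, Set.mem_prod, Set.mem_pi, Set.mem_singleton_iff,
      Finset.mem_coe]
  rw [this]
  exact (isOpen_set_pi E.finite_toSet (fun _ _ => isOpen_discrete _)).prod (isOpen_discrete _)

-- window lemma
lemma window_lemma {d n k : ℕ} {α : Type*} [TopologicalSpace α] [DiscreteTopology α]
    (s : Tape d n k → α) (hs : Continuous s) :
    ∃ E : Finset (Fin d → ℤ), ∀ x y : (Fin d → ℤ) → Fin n, ∀ q : Fin k,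
      (∀ u ∈ E, x u = y u) → s (x, q) = s (y, q) := by
  have key : ∀ p : Tape d n k, ∃ I : Finset (Fin d → ℤ),
      ∀ z : Tape d n k, (∀ a ∈ I, z.1 a = p.1 a) → z.2 = p.2 → s z = s p := by
    intro p
    have hU : IsOpen (s ⁻¹' {s p}) := (isOpen_discrete _).preimage hs
    rcases isOpen_prod_iff.mp hU p.1 p.2 (by simp) with ⟨u, v, hu, hv, hpu, hpv, huv⟩
    rcases isOpen_pi_iff.mp hu p.1 hpu with ⟨I, t, hI, hsub⟩
    refine ⟨I, fun z hz1 hz2 => ?_⟩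
    have hz1' : z.1 ∈ u := by
      apply hsub
      rw [Set.mem_pi]
      intro a ha
      rw [Finset.mem_coe] at ha
      rw [hz1 a ha]
      exact (hI a ha).2
    have : (z.1, z.2) ∈ u ×ˢ v := ⟨hz1', hz2 ▸ hpv⟩
    have := huv this
    simpa using this
  choose I hI using key
  have hopen : ∀ p : Tape d n k, IsOpen {z : Tape d n k | (∀ a ∈ I p, z.1 a = p.1 a) ∧ z.2 = p.2} :=
    fun p => isOpen_cyl d n k (I p) p.1 p.2
  obtain ⟨t, ht⟩ := IsCompact.elim_finite_subcover isCompact_univ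
    (fun p : Tape d n k => {z : Tape d n k | (∀ a ∈ I p, z.1 a = p.1 a) ∧ z.2 = p.2})
    hopen (fun z _ => Set.mem_iUnion.mpr ⟨z, fun a _ => rfl, rfl⟩)
  refine ⟨t.sup I, fun x y q hxy => ?_⟩
  obtain ⟨p, hp, hmem⟩ : ∃ p ∈ t, (x, q) ∈ {z : Tape d n k | (∀ a ∈ I p, z.1 a = p.1 a) ∧ z.2 = p.2} := by
    have := ht (Set.mem_univ (x, q))
    rw [Set.mem_iUnion₂] at this
    obtain ⟨p, hp, hm⟩ := this
    exact ⟨p, hp, hm⟩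
  have h1 : s (x, q) = s p := hI p (x, q) hmem.1 hmem.2
  have h2 : s (y, q) = s p := by
    refine hI p (y, q) (fun a ha => ?_) hmem.2
    have haE : a ∈ t.sup I := Finset.le_sup (f := I) hp ha
    show y a = p.1 a
    rw [← hxy a haE]
    exact hmem.1 a ha
  rw [h1, h2]

section Integral

variable (d n k : ℕ)

/-- extension of a pattern on a finite window by zeros -/
def extW (hn : 2 ≤ n) (E : Finset (Fin d → ℤ)) (w : ↥E → Fin n) : (Fin d → ℤ) → Fin n :=
  fun u => if h : u ∈ E then w ⟨u, h⟩ else ⟨0, by omega⟩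

lemma measure_toReal (hn : 2 ≤ n) (hk : 1 ≤ k)
    (μ : @Measure (Tape d n k) (borel (Tape d n k)))
    (hμ : ∀ (F : Finset (Fin d → ℤ)) (p : (Fin d → ℤ) → Fin n) (q : Fin k),
        μ {y : Tape d n k | (∀ u ∈ F, y.1 u = p u) ∧ y.2 = q} =
          1 / ((n : ENNReal) ^ F.card * (k : ENNReal)))
    (F : Finset (Fin d → ℤ)) (p : (Fin d → ℤ) → Fin n) (q : Fin k) :
    (μ {y : Tape d n k | (∀ u ∈ F, y.1 u = p u) ∧ y.2 = q}).toReal =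
      1 / ((n : ℝ) ^ F.card * (k : ℝ)) := by
  rw [hμ]
  simp [ENNReal.toReal_div, ENNReal.toReal_mul, ENNReal.toReal_pow]

lemma isFiniteMeasure (hn : 2 ≤ n) (hk : 1 ≤ k)
    (μ : @Measure (Tape d n k) (borel (Tape d n k)))
    (hμ : ∀ (F : Finset (Fin d → ℤ)) (p : (Fin d → ℤ) → Fin n) (q : Fin k),
        μ {y : Tape d n k | (∀ u ∈ F, y.1 u = p u) ∧ y.2 = q} =
          1 / ((n : ENNReal) ^ F.card * (k : ENNReal))) :
    @IsFiniteMeasure (Tape d n k) (borel _) μ := by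
  constructor
  set p0 : (Fin d → ℤ) → Fin n := fun _ => ⟨0, by omega⟩ with hp0
  have hcover : (Set.univ : Set (Tape d n k)) ⊆
      ⋃ q : Fin k, {y : Tape d n k | (∀ u ∈ (∅ : Finset (Fin d → ℤ)), y.1 u = p0 u) ∧ y.2 = q} := by
    intro y _
    exact Set.mem_iUnion.mpr ⟨y.2, by simp⟩
  calc μ Set.univ ≤ μ (⋃ q : Fin k, {y : Tape d n k |
        (∀ u ∈ (∅ : Finset (Fin d → ℤ)), y.1 u = p0 u) ∧ y.2 = q}) := measure_mono hcover
    _ ≤ ∑ q : Fin k, μ {y : Tape d n k |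
        (∀ u ∈ (∅ : Finset (Fin d → ℤ)), y.1 u = p0 u) ∧ y.2 = q} :=
        measure_iUnion_fintype_le μ _
    _ < ⊤ := by
        apply ENNReal.sum_lt_top.mpr
        intro q _
        rw [hμ (∅ : Finset (Fin d → ℤ)) p0 q]
        apply ENNReal.div_lt_top
        · exact ENNReal.one_ne_top
        · simp only [Finset.card_empty, pow_zero, one_mul]
          exact_mod_cast Nat.cast_ne_zero.mpr (by omega)

lemma integral_window (hn : 2 ≤ n) (hk : 1 ≤ k)
    (μ : @Measure (Tape d n k) (borel (Tape d n k)))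
    (hμ : ∀ (F : Finset (Fin d → ℤ)) (p : (Fin d → ℤ) → Fin n) (q : Fin k),
        μ {y : Tape d n k | (∀ u ∈ F, y.1 u = p u) ∧ y.2 = q} =
          1 / ((n : ENNReal) ^ F.card * (k : ENNReal)))
    (E : Finset (Fin d → ℤ)) (g : Tape d n k → ℝ)
    (hdet : ∀ x y q, (∀ u ∈ E, x u = y u) → g (x, q) = g (y, q)) :
    ∫ p, g p ∂μ =
      (∑ w : ↥E → Fin n, ∑ q : Fin k, g (extW d n hn E w, q)) * (1 / ((n:ℝ)^E.card * k)) := by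
  classical
  letI : MeasurableSpace (Tape d n k) := borel _
  haveI : BorelSpace (Tape d n k) := ⟨rfl⟩
  haveI : IsFiniteMeasure μ := isFiniteMeasure d n k hn hk μ hμ
  set cyl : (↥E → Fin n) → Fin k → Set (Tape d n k) :=
    fun w q => {y | (∀ u ∈ E, y.1 u = extW d n hn E w u) ∧ y.2 = q} with hcyl
  have hmeas : ∀ w q, MeasurableSet (cyl w q) :=
    fun w q => (isOpen_cyl d n k E (extW d n hn E w) q).measurableSet
  have hg : g = fun p => ∑ w : ↥E → Fin n, ∑ q : Fin k,
      Set.indicator (cyl w q) (fun _ => g (extW d n hn E w, q)) p := by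
    funext p
    set w0 : ↥E → Fin n := fun u => p.1 ↑u with hw0
    have hps : p ∈ cyl w0 p.2 := by
      refine ⟨fun u hu => ?_, rfl⟩
      simp [extW, hu, hw0]
    rw [Finset.sum_eq_single w0]
    · rw [Finset.sum_eq_single p.2]
      · rw [Set.indicator_of_mem hps]
        have : (∀ u ∈ E, extW d n hn E w0 u = p.1 u) := by
          intro u hu; simp [extW, hu, hw0]
        have := hdet (extW d n hn E w0) p.1 p.2 this
        rw [this]
      · intro q _ hq
        apply Set.indicator_of_notMem
        intro hmem
        exact hq hmem.2.symm
      · intro h; exact absurd (Finset.mem_univ _) h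
    · intro w _ hw
      apply Finset.sum_eq_zero
      intro q _
      apply Set.indicator_of_notMem
      intro hmem
      apply hw
      funext u
      have h1 := hmem.1 u.1 u.2
      simp only [extW, u.2, dif_pos] at h1
      rw [← h1]
    · intro h; exact absurd (Finset.mem_univ _) h
  have hint : ∀ (w : ↥E → Fin n) (q : Fin k),
      ∫ p, Set.indicator (cyl w q) (fun _ => g (extW d n hn E w, q)) p ∂μ =
        g (extW d n hn E w, q) * (1 / ((n:ℝ)^E.card * k)) := by
    intro w q
    rw [integral_indicator_const _ (hmeas w q), measureReal_def]
    rw [measure_toReal d n k hn hk μ hμ E (extW d n hn E w) q]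
    rw [smul_eq_mul, mul_comm]
  conv_lhs => rw [hg]
  rw [integral_finset_sum _ (fun w _ => integrable_finset_sum _
    (fun q _ => (integrable_const _).indicator (hmeas w q)))]
  rw [Finset.sum_congr rfl (fun w _ => integral_finset_sum _
    (fun q _ => (integrable_const _).indicator (hmeas w q)))]
  rw [Finset.sum_mul]
  refine Finset.sum_congr rfl (fun w _ => ?_)
  rw [Finset.sum_mul]
  exact Finset.sum_congr rfl (fun q _ => hint w q)

end Integral

lemma mem_closure_of_continuous (d n k : ℕ) (hn : 2 ≤ n) (hk : 1 ≤ k)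
    (μ : @Measure (Tape d n k) (borel (Tape d n k)))
    (hμ : ∀ (F : Finset (Fin d → ℤ)) (p : (Fin d → ℤ) → Fin n) (q : Fin k),
        μ {y : Tape d n k | (∀ u ∈ F, y.1 u = p u) ∧ y.2 = q} =
          1 / ((n : ENNReal) ^ F.card * (k : ENNReal)))
    (s : Tape d n k → (Fin d → ℤ)) (hs : Continuous s) :
    (fun i => ∫ p, ((s p i : ℤ) : ℝ) ∂μ) ∈
      AddSubgroup.closure {w : Fin d → ℝ | ∃ (i : Fin d) (j : ℕ),
        w = Pi.single i (1 / ((k : ℝ) * (n : ℝ) ^ j))} := by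
  classical
  obtain ⟨E, hE⟩ := window_lemma s hs
  set Z : Fin d → ℤ := fun i => ∑ w : ↥E → Fin n, ∑ q : Fin k, s (extW d n hn E w, q) i with hZ
  have hint : ∀ i, ∫ p, ((s p i : ℤ) : ℝ) ∂μ = (Z i : ℝ) * (1 / ((k:ℝ) * (n:ℝ)^E.card)) := by
    intro i
    rw [integral_window d n k hn hk μ hμ E (fun p => ((s p i : ℤ) : ℝ))
      (fun x y q h => by rw [hE x y q h])]
    rw [hZ]
    push_cast
    ring
  have heq : (fun i => ∫ p, ((s p i : ℤ) : ℝ) ∂μ) =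
      ∑ i : Fin d, (Z i) • (Pi.single i (1 / ((k:ℝ) * (n:ℝ)^E.card)) : Fin d → ℝ) := by
    funext i'
    rw [Finset.sum_apply]
    rw [hint i']
    rw [Finset.sum_eq_single i']
    · rw [Pi.smul_apply, Pi.single_eq_same, zsmul_eq_mul]
    · intro b _ hb
      rw [Pi.smul_apply, Pi.single_eq_of_ne (Ne.symm hb), smul_zero]
    · intro h; exact absurd (Finset.mem_univ _) h
  rw [heq]
  refine AddSubgroup.sum_mem _ (fun i _ => AddSubgroup.zsmul_mem _
    (AddSubgroup.subset_closure ?_) _)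
  exact ⟨i, E.card, rfl⟩

section Machine

variable (d n k : ℕ)

/-- `l`-th cell along direction `m` -/
def cmv (m : Fin d → ℤ) (l : ℕ) : Fin d → ℤ := (l : ℤ) • m

def FFs (j : ℕ) (m : Fin d → ℤ) : Finset (Fin d → ℤ) := (Finset.range (j+1)).image (cmv d m)
def F1s (j : ℕ) (m : Fin d → ℤ) : Finset (Fin d → ℤ) := (Finset.Icc 1 j).image (cmv d m)
def Fps (j : ℕ) (m : Fin d → ℤ) : Finset (Fin d → ℤ) := (Finset.range j).image (cmv d m)

def eventF (z₀ : Fin n) (j : ℕ) (m : Fin d → ℤ) (x : (Fin d → ℤ) → Fin n) : Prop :=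
  ∀ l ∈ Finset.Icc 1 j, x (cmv d m l) = z₀

def eventB (z₀ : Fin n) (j : ℕ) (m : Fin d → ℤ) (x : (Fin d → ℤ) → Fin n) : Prop :=
  ∀ l ∈ Finset.range j, x (cmv d m l) = z₀

instance (z₀ : Fin n) (j : ℕ) (m : Fin d → ℤ) (x : (Fin d → ℤ) → Fin n) :
    Decidable (eventF d n z₀ j m x) := by unfold eventF; infer_instance

instance (z₀ : Fin n) (j : ℕ) (m : Fin d → ℤ) (x : (Fin d → ℤ) → Fin n) :
    Decidable (eventB d n z₀ j m x) := by unfold eventB; infer_instance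

def projF (z₀ : Fin n) (j : ℕ) (m : Fin d → ℤ) (x : (Fin d → ℤ) → Fin n) :
    (Fin d → ℤ) → Fin n := fun u => if u ∈ FFs d j m then x u else z₀

def rotL (z₀ : Fin n) (j : ℕ) (m : Fin d → ℤ) (x : (Fin d → ℤ) → Fin n) :
    (Fin d → ℤ) → Fin n :=
  fun u => if u ∈ Fps d j m then x (u + m) else if u = cmv d m j then x 0 else z₀

def rotR (z₀ : Fin n) (j : ℕ) (m : Fin d → ℤ) (x : (Fin d → ℤ) → Fin n) :
    (Fin d → ℤ) → Fin n :=
  fun u => if u = 0 then x (cmv d m j) else if u ∈ F1s d j m then x (u - m) else z₀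

def ruleF (z₀ : Fin n) (q₀ : Fin k) (j : ℕ) (m : Fin d → ℤ) :
    ((Fin d → ℤ) → Fin n) × Fin k → ((Fin d → ℤ) → Fin n) × Fin k × (Fin d → ℤ) :=
  fun xq =>
    if xq.2 = q₀ then
      (if eventF d n z₀ j m xq.1 then (projF d n z₀ j m xq.1, q₀, m)
       else (rotL d n z₀ j m xq.1, q₀, 0))
    else (projF d n z₀ j m xq.1, xq.2, 0)

def ruleB (z₀ : Fin n) (q₀ : Fin k) (j : ℕ) (m : Fin d → ℤ) :
    ((Fin d → ℤ) → Fin n) × Fin k → ((Fin d → ℤ) → Fin n) × Fin k × (Fin d → ℤ) :=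
  fun xq =>
    if xq.2 = q₀ then
      (if eventB d n z₀ j m xq.1 then (projF d n z₀ j m xq.1, q₀, -m)
       else (rotR d n z₀ j m xq.1, q₀, 0))
    else (projF d n z₀ j m xq.1, xq.2, 0)

/-- generic TM built from a local rule, matching the `IsTM` formula definitionally -/
def mkTM (Fo : Finset (Fin d → ℤ))
    (f : ((Fin d → ℤ) → Fin n) × Fin k → ((Fin d → ℤ) → Fin n) × Fin k × (Fin d → ℤ)) :
    Head d n k → Head d n k :=
  fun p =>
    ((fun u => if u - p.2.2 ∈ Fo then (f (shiftC (-p.2.2) p.1, p.2.1)).1 (u - p.2.2) else p.1 u),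
     (f (shiftC (-p.2.2) p.1, p.2.1)).2.1,
     p.2.2 + (f (shiftC (-p.2.2) p.1, p.2.1)).2.2)

lemma mkTM_isTM (Fo : Finset (Fin d → ℤ)) (f)
    (hloc : ∀ (x y : (Fin d → ℤ) → Fin n) (q : Fin k),
        (∀ u ∈ Fo, x u = y u) → f (x, q) = f (y, q)) :
    IsTM d n k (mkTM d n k Fo f) :=
  ⟨Fo, Fo, f, hloc, fun _ _ _ => rfl⟩

section Facts

variable {d : ℕ} {m : Fin d → ℤ}

lemma cm_inj (hm : m ≠ 0) : Function.Injective (cmv d m) := by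
  intro l₁ l₂ h
  obtain ⟨i, hi⟩ := Function.ne_iff.mp hm
  have := congrFun h i
  simp only [cmv, Pi.smul_apply, smul_eq_mul] at this
  have : (l₁ : ℤ) = l₂ := mul_right_cancel₀ (by simpa using hi) this
  exact_mod_cast this

lemma cm_zero : cmv d m 0 = 0 := by simp [cmv]

lemma cm_succ (l : ℕ) : cmv d m (l + 1) = cmv d m l + m := by
  simp only [cmv]
  push_cast
  rw [add_smul, one_smul]

lemma cm_pred (l : ℕ) (hl : 1 ≤ l) : cmv d m l - m = cmv d m (l - 1) := by
  have := cm_succ (d := d) (m := m) (l - 1)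
  rw [Nat.sub_add_cancel hl] at this
  rw [this]
  abel

lemma mem_FFs {j : ℕ} {u : Fin d → ℤ} : u ∈ FFs d j m ↔ ∃ l ≤ j, u = cmv d m l := by
  simp only [FFs, Finset.mem_image, Finset.mem_range]
  constructor
  · rintro ⟨l, hl, rfl⟩; exact ⟨l, by omega, rfl⟩
  · rintro ⟨l, hl, rfl⟩; exact ⟨l, by omega, rfl⟩

lemma mem_Fps {j : ℕ} {u : Fin d → ℤ} : u ∈ Fps d j m ↔ ∃ l < j, u = cmv d m l := by
  simp only [Fps, Finset.mem_image, Finset.mem_range]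
  constructor
  · rintro ⟨l, hl, rfl⟩; exact ⟨l, hl, rfl⟩
  · rintro ⟨l, hl, rfl⟩; exact ⟨l, hl, rfl⟩

lemma mem_F1s {j : ℕ} {u : Fin d → ℤ} : u ∈ F1s d j m ↔ ∃ l, 1 ≤ l ∧ l ≤ j ∧ u = cmv d m l := by
  simp only [F1s, Finset.mem_image, Finset.mem_Icc]
  constructor
  · rintro ⟨l, ⟨h1, h2⟩, rfl⟩; exact ⟨l, h1, h2, rfl⟩
  · rintro ⟨l, h1, h2, rfl⟩; exact ⟨l, ⟨h1, h2⟩, rfl⟩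

lemma cm_mem_FFs {j l : ℕ} (h : l ≤ j) : cmv d m l ∈ FFs d j m :=
  mem_FFs.mpr ⟨l, h, rfl⟩

lemma cm_mem_Fps {j l : ℕ} (h : l < j) : cmv d m l ∈ Fps d j m :=
  mem_Fps.mpr ⟨l, h, rfl⟩

lemma cm_mem_F1s {j l : ℕ} (h1 : 1 ≤ l) (h2 : l ≤ j) : cmv d m l ∈ F1s d j m :=
  mem_F1s.mpr ⟨l, h1, h2, rfl⟩

lemma cm_eq_iff (hm : m ≠ 0) {l₁ l₂ : ℕ} : cmv d m l₁ = cmv d m l₂ ↔ l₁ = l₂ :=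
  ⟨fun h => cm_inj hm h, fun h => h ▸ rfl⟩

lemma cm_eq_zero_iff (hm : m ≠ 0) {l : ℕ} : cmv d m l = 0 ↔ l = 0 :=
  ⟨fun h => cm_inj hm (by rw [h, cm_zero]), fun h => by rw [h, cm_zero]⟩

lemma cmj_not_mem_Fps (hm : m ≠ 0) {j : ℕ} : cmv d m j ∉ Fps d j m := by
  rw [mem_Fps]
  rintro ⟨l, hl, he⟩
  rw [cm_eq_iff hm] at he
  omega

end Facts

lemma shiftC_apply {d n : ℕ} (v : Fin d → ℤ) (x : (Fin d → ℤ) → Fin n) (u : Fin d → ℤ) :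
    shiftC (-v) x u = x (u + v) := by
  simp [shiftC, sub_neg_eq_add]

section Branch

variable {d n k : ℕ} (z₀ : Fin n) (q₀ : Fin k) (j : ℕ) (m : Fin d → ℤ)

lemma TF_event (x : (Fin d → ℤ) → Fin n) (v : Fin d → ℤ)
    (he : eventF d n z₀ j m (shiftC (-v) x)) :
    mkTM d n k (FFs d j m) (ruleF d n k z₀ q₀ j m) (x, q₀, v) = (x, q₀, v + m) := by
  have hrule : ruleF d n k z₀ q₀ j m (shiftC (-v) x, q₀) =
      (projF d n z₀ j m (shiftC (-v) x), q₀, m) := by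
    unfold ruleF; rw [if_pos rfl, if_pos he]
  unfold mkTM
  simp only [hrule]
  refine Prod.ext ?_ rfl
  funext u
  simp only []
  by_cases h : u - v ∈ FFs d j m
  · rw [if_pos h]
    unfold projF
    rw [if_pos h, shiftC_apply]
    congr 1
    abel
  · rw [if_neg h]

lemma TF_rot (hm : m ≠ 0) (x : (Fin d → ℤ) → Fin n) (v : Fin d → ℤ)
    (he : ¬ eventF d n z₀ j m (shiftC (-v) x)) :
    mkTM d n k (FFs d j m) (ruleF d n k z₀ q₀ j m) (x, q₀, v) =
      ((fun u => if u - v ∈ Fps d j m then x (u + m)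
        else if u - v = cmv d m j then x v else x u), q₀, v) := by
  have hrule : ruleF d n k z₀ q₀ j m (shiftC (-v) x, q₀) =
      (rotL d n z₀ j m (shiftC (-v) x), q₀, 0) := by
    unfold ruleF; rw [if_pos rfl, if_neg he]
  unfold mkTM
  simp only [hrule]
  refine Prod.ext ?_ (Prod.ext rfl (add_zero v))
  funext u
  simp only []
  by_cases h1 : u - v ∈ Fps d j m
  · obtain ⟨l, hl, hu⟩ := mem_Fps.mp h1
    have hFF : u - v ∈ FFs d j m := hu ▸ cm_mem_FFs (by omega)
    rw [if_pos hFF, if_pos h1]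
    unfold rotL
    rw [if_pos h1, shiftC_apply]
    congr 1
    abel
  · rw [if_neg h1]
    by_cases h2 : u - v = cmv d m j
    · have hFF : u - v ∈ FFs d j m := h2 ▸ cm_mem_FFs le_rfl
      rw [if_pos hFF, if_pos h2]
      unfold rotL
      rw [if_neg h1, if_pos h2, shiftC_apply, zero_add]
    · rw [if_neg h2]
      have hFF : u - v ∉ FFs d j m := by
        intro hmem
        obtain ⟨l, hl, hu⟩ := mem_FFs.mp hmem
        rcases Nat.lt_or_ge l j with h | h
        · exact h1 (hu ▸ cm_mem_Fps h)
        · have : l = j := by omega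
          exact h2 (this ▸ hu)
      rw [if_neg hFF]

lemma TF_other (x : (Fin d → ℤ) → Fin n) (q : Fin k) (v : Fin d → ℤ) (hq : q ≠ q₀) :
    mkTM d n k (FFs d j m) (ruleF d n k z₀ q₀ j m) (x, q, v) = (x, q, v) := by
  have hrule : ruleF d n k z₀ q₀ j m (shiftC (-v) x, q) =
      (projF d n z₀ j m (shiftC (-v) x), q, 0) := by
    unfold ruleF; rw [if_neg hq]
  unfold mkTM
  simp only [hrule]
  refine Prod.ext ?_ (Prod.ext rfl (add_zero v))
  funext u
  simp only []
  by_cases h : u - v ∈ FFs d j m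
  · rw [if_pos h]
    unfold projF
    rw [if_pos h, shiftC_apply]
    congr 1
    abel
  · rw [if_neg h]

lemma TB_event (y : (Fin d → ℤ) → Fin n) (v : Fin d → ℤ)
    (he : eventB d n z₀ j m (shiftC (-v) y)) :
    mkTM d n k (FFs d j m) (ruleB d n k z₀ q₀ j m) (y, q₀, v) = (y, q₀, v + -m) := by
  have hrule : ruleB d n k z₀ q₀ j m (shiftC (-v) y, q₀) =
      (projF d n z₀ j m (shiftC (-v) y), q₀, -m) := by
    unfold ruleB; rw [if_pos rfl, if_pos he]
  unfold mkTM
  simp only [hrule]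
  refine Prod.ext ?_ rfl
  funext u
  simp only []
  by_cases h : u - v ∈ FFs d j m
  · rw [if_pos h]
    unfold projF
    rw [if_pos h, shiftC_apply]
    congr 1
    abel
  · rw [if_neg h]

lemma TB_rot (hm : m ≠ 0) (y : (Fin d → ℤ) → Fin n) (v : Fin d → ℤ)
    (he : ¬ eventB d n z₀ j m (shiftC (-v) y)) :
    mkTM d n k (FFs d j m) (ruleB d n k z₀ q₀ j m) (y, q₀, v) =
      ((fun u => if u - v = 0 then y (cmv d m j + v)
        else if u - v ∈ F1s d j m then y (u - m) else y u), q₀, v) := by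
  have hrule : ruleB d n k z₀ q₀ j m (shiftC (-v) y, q₀) =
      (rotR d n z₀ j m (shiftC (-v) y), q₀, 0) := by
    unfold ruleB; rw [if_pos rfl, if_neg he]
  unfold mkTM
  simp only [hrule]
  refine Prod.ext ?_ (Prod.ext rfl (add_zero v))
  funext u
  simp only []
  by_cases h0 : u - v = 0
  · have hFF : u - v ∈ FFs d j m := by
      rw [h0, ← cm_zero (m := m)]
      exact cm_mem_FFs (Nat.zero_le j)
    rw [if_pos hFF, if_pos h0]
    unfold rotR
    rw [if_pos h0, shiftC_apply]
  · rw [if_neg h0]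
    by_cases h1 : u - v ∈ F1s d j m
    · obtain ⟨l, hl1, hl2, hu⟩ := mem_F1s.mp h1
      have hFF : u - v ∈ FFs d j m := hu ▸ cm_mem_FFs hl2
      rw [if_pos hFF, if_pos h1]
      unfold rotR
      rw [if_neg h0, if_pos h1, shiftC_apply]
      congr 1
      abel
    · rw [if_neg h1]
      have hFF : u - v ∉ FFs d j m := by
        intro hmem
        obtain ⟨l, hl, hu⟩ := mem_FFs.mp hmem
        rcases Nat.eq_zero_or_pos l with h | h
        · subst h; rw [cm_zero] at hu; exact h0 hu
        · exact h1 (hu ▸ cm_mem_F1s h hl)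
      rw [if_neg hFF]

lemma TB_other (y : (Fin d → ℤ) → Fin n) (q : Fin k) (v : Fin d → ℤ) (hq : q ≠ q₀) :
    mkTM d n k (FFs d j m) (ruleB d n k z₀ q₀ j m) (y, q, v) = (y, q, v) := by
  have hrule : ruleB d n k z₀ q₀ j m (shiftC (-v) y, q) =
      (projF d n z₀ j m (shiftC (-v) y), q, 0) := by
    unfold ruleB; rw [if_neg hq]
  unfold mkTM
  simp only [hrule]
  refine Prod.ext ?_ (Prod.ext rfl (add_zero v))
  funext u
  simp only []
  by_cases h : u - v ∈ FFs d j m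
  · rw [if_pos h]
    unfold projF
    rw [if_pos h, shiftC_apply]
    congr 1
    abel
  · rw [if_neg h]

lemma TB_TF (hm : m ≠ 0) (p : Head d n k) :
    mkTM d n k (FFs d j m) (ruleB d n k z₀ q₀ j m)
      (mkTM d n k (FFs d j m) (ruleF d n k z₀ q₀ j m) p) = p := by
  obtain ⟨x, q, v⟩ := p
  by_cases hq : q = q₀
  · subst hq
    by_cases he : eventF d n z₀ j m (shiftC (-v) x)
    · rw [TF_event z₀ q j m x v he]
      have heB : eventB d n z₀ j m (shiftC (-(v + m)) x) := by
        intro l hl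
        rw [Finset.mem_range] at hl
        rw [shiftC_apply]
        have h1 : cmv d m l + (v + m) = cmv d m (l+1) + v := by rw [cm_succ]; abel
        rw [h1, ← shiftC_apply v x (cmv d m (l+1))]
        exact he (l+1) (Finset.mem_Icc.mpr ⟨by omega, by omega⟩)
      rw [TB_event z₀ q j m x (v + m) heB, add_neg_cancel_right]
    · rw [TF_rot z₀ q j m hm x v he]
      set Y : (Fin d → ℤ) → Fin n := fun u => if u - v ∈ Fps d j m then x (u + m)
        else if u - v = cmv d m j then x v else x u with hY
      have hYl : ∀ l, l < j → Y (cmv d m l + v) = x (cmv d m (l+1) + v) := by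
        intro l hl
        rw [hY]
        simp only []
        rw [add_sub_cancel_right, if_pos (cm_mem_Fps hl)]
        congr 1
        rw [cm_succ]
        abel
      have heB : ¬ eventB d n z₀ j m (shiftC (-v) Y) := by
        intro hB
        apply he
        intro l hl
        rw [Finset.mem_Icc] at hl
        have h2 := hB (l-1) (Finset.mem_range.mpr (by omega))
        rw [shiftC_apply, hYl (l-1) (by omega), Nat.sub_add_cancel hl.1] at h2
        rw [shiftC_apply]
        exact h2
      rw [TB_rot z₀ q j m hm Y v heB]
      refine Prod.ext ?_ rfl
      funext u
      simp only []
      by_cases h0 : u - v = 0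
      · rw [if_pos h0]
        have hu : u = v := sub_eq_zero.mp h0
        rw [hY]
        simp only []
        rw [add_sub_cancel_right, if_neg (cmj_not_mem_Fps hm), if_pos rfl, hu]
      · rw [if_neg h0]
        by_cases h1 : u - v ∈ F1s d j m
        · rw [if_pos h1]
          obtain ⟨l, hl1, hl2, hu⟩ := mem_F1s.mp h1
          have h3 : u - m - v = cmv d m (l - 1) := by
            rw [show u - m - v = u - v - m by abel, hu, cm_pred l hl1]
          rw [hY]
          simp only []
          rw [h3, if_pos (cm_mem_Fps (by omega))]
          congr 1
          abel
        · rw [if_neg h1, hY]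
          simp only []
          have hp : u - v ∉ Fps d j m := by
            intro hmem
            obtain ⟨l, hl, hu⟩ := mem_Fps.mp hmem
            rcases Nat.eq_zero_or_pos l with h | h
            · subst h; rw [cm_zero] at hu; exact h0 hu
            · exact h1 (hu ▸ cm_mem_F1s h (by omega))
          have hj : u - v ≠ cmv d m j := by
            intro hmem
            rcases Nat.eq_zero_or_pos j with h | h
            · subst h; rw [cm_zero] at hmem; exact h0 hmem
            · exact h1 (hmem ▸ cm_mem_F1s h le_rfl)
          rw [if_neg hp, if_neg hj]
  · rw [TF_other z₀ q₀ j m x q v hq, TB_other z₀ q₀ j m x q v hq]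

lemma TF_TB (hm : m ≠ 0) (p : Head d n k) :
    mkTM d n k (FFs d j m) (ruleF d n k z₀ q₀ j m)
      (mkTM d n k (FFs d j m) (ruleB d n k z₀ q₀ j m) p) = p := by
  obtain ⟨y, q, v⟩ := p
  by_cases hq : q = q₀
  · subst hq
    by_cases he : eventB d n z₀ j m (shiftC (-v) y)
    · rw [TB_event z₀ q j m y v he]
      have heF : eventF d n z₀ j m (shiftC (-(v + -m)) y) := by
        intro l hl
        rw [Finset.mem_Icc] at hl
        rw [shiftC_apply]
        have h1 : cmv d m l + (v + -m) = cmv d m (l-1) + v := by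
          rw [← cm_pred l hl.1]
          abel
        rw [h1, ← shiftC_apply v y (cmv d m (l-1))]
        exact he (l-1) (Finset.mem_range.mpr (by omega))
      rw [TF_event z₀ q j m y (v + -m) heF, neg_add_cancel_right]
    · rw [TB_rot z₀ q j m hm y v he]
      set X : (Fin d → ℤ) → Fin n := fun u => if u - v = 0 then y (cmv d m j + v)
        else if u - v ∈ F1s d j m then y (u - m) else y u with hX
      have hXl : ∀ l, 1 ≤ l → l ≤ j → X (cmv d m l + v) = y (cmv d m (l-1) + v) := by
        intro l h1 h2
        rw [hX]
        simp only []
        rw [add_sub_cancel_right]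
        rw [if_neg (by rw [cm_eq_zero_iff hm]; omega), if_pos (cm_mem_F1s h1 h2)]
        congr 1
        rw [show cmv d m l + v - m = cmv d m l - m + v by abel, cm_pred l h1]
      have heF : ¬ eventF d n z₀ j m (shiftC (-v) X) := by
        intro hF
        apply he
        intro l hl
        rw [Finset.mem_range] at hl
        have h2 := hF (l+1) (Finset.mem_Icc.mpr ⟨by omega, by omega⟩)
        rw [shiftC_apply, hXl (l+1) (by omega) (by omega), Nat.add_sub_cancel] at h2
        rw [shiftC_apply]
        exact h2
      rw [TF_rot z₀ q j m hm X v heF]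
      refine Prod.ext ?_ rfl
      funext u
      simp only []
      by_cases h1 : u - v ∈ Fps d j m
      · rw [if_pos h1]
        obtain ⟨l, hl, hu⟩ := mem_Fps.mp h1
        have h2 : u + m - v = cmv d m (l+1) := by
          rw [cm_succ, ← hu]
          abel
        rw [hX]
        simp only []
        rw [h2, if_neg (by rw [cm_eq_zero_iff hm]; omega),
          if_pos (cm_mem_F1s (by omega) (by omega))]
        congr 1
        abel
      · rw [if_neg h1]
        by_cases h2 : u - v = cmv d m j
        · rw [if_pos h2, hX]
          simp only []
          rw [sub_self, if_pos rfl]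
          congr 1
          rw [sub_eq_iff_eq_add.mp h2]
        · rw [if_neg h2, hX]
          simp only []
          have hz : u - v ≠ 0 := by
            intro hmem
            rcases Nat.eq_zero_or_pos j with h | h
            · apply h2
              rw [hmem, h, cm_zero]
            · apply h1
              rw [hmem, ← cm_zero (m := m)]
              exact cm_mem_Fps h
          have hf : u - v ∉ F1s d j m := by
            intro hmem
            obtain ⟨l, hl1, hl2, hu⟩ := mem_F1s.mp hmem
            rcases Nat.lt_or_ge l j with h | h
            · exact h1 (hu ▸ cm_mem_Fps h)
            · have : l = j := by omega
              exact h2 (this ▸ hu)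
          rw [if_neg hz, if_neg hf]
  · rw [TB_other z₀ q₀ j m y q v hq, TF_other z₀ q₀ j m y q v hq]

end Branch

section Loc

variable {d n k : ℕ} (z₀ : Fin n) (q₀ : Fin k) (j : ℕ) (m : Fin d → ℤ)

lemma not_mem_FFs_cases {u : Fin d → ℤ} (hm : m ≠ 0) (hu : u ∉ FFs d j m) :
    u ∉ Fps d j m ∧ u ≠ cmv d m j ∧ u ∉ F1s d j m ∧ u ≠ 0 := by
  refine ⟨fun h => ?_, fun h => ?_, fun h => ?_, fun h => ?_⟩
  · obtain ⟨l, hl, rfl⟩ := mem_Fps.mp h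
    exact hu (cm_mem_FFs (by omega))
  · exact hu (h ▸ cm_mem_FFs le_rfl)
  · obtain ⟨l, _, hl2, rfl⟩ := mem_F1s.mp h
    exact hu (cm_mem_FFs hl2)
  · apply hu
    rw [h, ← cm_zero (m := m)]
    exact cm_mem_FFs (Nat.zero_le j)

lemma ruleF_local (x y : (Fin d → ℤ) → Fin n) (q : Fin k)
    (h : ∀ u ∈ FFs d j m, x u = y u) :
    ruleF d n k z₀ q₀ j m (x, q) = ruleF d n k z₀ q₀ j m (y, q) := by
  have hev : eventF d n z₀ j m x ↔ eventF d n z₀ j m y := by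
    unfold eventF
    constructor <;> intro hx l hl <;> rw [Finset.mem_Icc] at hl
    · rw [← h _ (cm_mem_FFs hl.2)]
      exact hx l (Finset.mem_Icc.mpr hl)
    · rw [h _ (cm_mem_FFs hl.2)]
      exact hx l (Finset.mem_Icc.mpr hl)
  have hproj : projF d n z₀ j m x = projF d n z₀ j m y := by
    funext u
    unfold projF
    by_cases hu : u ∈ FFs d j m
    · rw [if_pos hu, if_pos hu, h u hu]
    · rw [if_neg hu, if_neg hu]
  have hrot : rotL d n z₀ j m x = rotL d n z₀ j m y := by
    funext u
    unfold rotL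
    by_cases h1 : u ∈ Fps d j m
    · rw [if_pos h1, if_pos h1]
      obtain ⟨l, hl, rfl⟩ := mem_Fps.mp h1
      rw [← cm_succ]
      exact h _ (cm_mem_FFs (by omega))
    · rw [if_neg h1, if_neg h1]
      by_cases h2 : u = cmv d m j
      · rw [if_pos h2, if_pos h2, show (0 : Fin d → ℤ) = cmv d m 0 from cm_zero.symm]
        exact h _ (cm_mem_FFs (Nat.zero_le j))
      · rw [if_neg h2, if_neg h2]
  unfold ruleF
  by_cases hq : q = q₀
  · rw [if_pos hq, if_pos hq]
    by_cases hevx : eventF d n z₀ j m x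
    · rw [if_pos hevx, if_pos (hev.mp hevx), hproj]
    · rw [if_neg hevx, if_neg (fun hy => hevx (hev.mpr hy)), hrot]
  · rw [if_neg hq, if_neg hq, hproj]

lemma ruleB_local (x y : (Fin d → ℤ) → Fin n) (q : Fin k)
    (h : ∀ u ∈ FFs d j m, x u = y u) :
    ruleB d n k z₀ q₀ j m (x, q) = ruleB d n k z₀ q₀ j m (y, q) := by
  have hev : eventB d n z₀ j m x ↔ eventB d n z₀ j m y := by
    unfold eventB
    constructor <;> intro hx l hl <;> rw [Finset.mem_range] at hl
    · rw [← h _ (cm_mem_FFs (by omega))]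
      exact hx l (Finset.mem_range.mpr hl)
    · rw [h _ (cm_mem_FFs (by omega))]
      exact hx l (Finset.mem_range.mpr hl)
  have hproj : projF d n z₀ j m x = projF d n z₀ j m y := by
    funext u
    unfold projF
    by_cases hu : u ∈ FFs d j m
    · rw [if_pos hu, if_pos hu, h u hu]
    · rw [if_neg hu, if_neg hu]
  have hrot : rotR d n z₀ j m x = rotR d n z₀ j m y := by
    funext u
    unfold rotR
    by_cases h1 : u = 0
    · rw [if_pos h1, if_pos h1]
      exact h _ (cm_mem_FFs le_rfl)
    · rw [if_neg h1, if_neg h1]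
      by_cases h2 : u ∈ F1s d j m
      · rw [if_pos h2, if_pos h2]
        obtain ⟨l, hl1, hl2, rfl⟩ := mem_F1s.mp h2
        rw [cm_pred l hl1]
        exact h _ (cm_mem_FFs (by omega))
      · rw [if_neg h2, if_neg h2]
  unfold ruleB
  by_cases hq : q = q₀
  · rw [if_pos hq, if_pos hq]
    by_cases hevx : eventB d n z₀ j m x
    · rw [if_pos hevx, if_pos (hev.mp hevx), hproj]
    · rw [if_neg hevx, if_neg (fun hy => hevx (hev.mpr hy)), hrot]
  · rw [if_neg hq, if_neg hq, hproj]

lemma sF_continuous : Continuous (fun p : Tape d n k =>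
    if p.2 = q₀ ∧ eventF d n z₀ j m p.1 then -m else (0 : Fin d → ℤ)) := by
  classical
  have hg : Continuous (fun p : Tape d n k =>
      ((p.2, fun l : ↥(Finset.Icc 1 j) => p.1 (cmv d m ↑l)) :
        Fin k × (↥(Finset.Icc 1 j) → Fin n))) :=
    continuous_snd.prodMk (continuous_pi fun l => (continuous_apply _).comp continuous_fst)
  have heq : (fun p : Tape d n k =>
      if p.2 = q₀ ∧ eventF d n z₀ j m p.1 then -m else (0 : Fin d → ℤ))
      = (fun y : Fin k × (↥(Finset.Icc 1 j) → Fin n) =>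
          if y.1 = q₀ ∧ (∀ l, y.2 l = z₀) then -m else (0 : Fin d → ℤ)) ∘
        (fun p : Tape d n k => (p.2, fun l : ↥(Finset.Icc 1 j) => p.1 (cmv d m ↑l))) := by
    funext p
    simp only [Function.comp_apply]
    refine if_congr (and_congr_right fun _ =>
      ⟨fun h l => h ↑l l.2, fun h l hl => h ⟨l, hl⟩⟩) rfl rfl
  rw [heq]
  exact Continuous.comp continuous_of_discreteTopology hg

end Loc

lemma shiftC_negzero {d n : ℕ} (x : (Fin d → ℤ) → Fin n) :
    shiftC (-(0 : Fin d → ℤ)) x = x := by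
  funext u
  simp [shiftC]

lemma exists_machine (d n k : ℕ) (hn : 2 ≤ n) (hk : 1 ≤ k)
    (μ : @Measure (Tape d n k) (borel (Tape d n k)))
    (hμ : ∀ (F : Finset (Fin d → ℤ)) (p : (Fin d → ℤ) → Fin n) (q : Fin k),
        μ {y : Tape d n k | (∀ u ∈ F, y.1 u = p u) ∧ y.2 = q} =
          1 / ((n : ENNReal) ^ F.card * (k : ENNReal)))
    (c : ℕ) (m : Fin d → ℤ) :
    ∃ (T : Head d n k → Head d n k) (s : Tape d n k → (Fin d → ℤ)),
      IsRTM d n k T ∧ IsShiftIndicator d n k (Psi d n k T) s ∧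
      ∀ i, (∫ p, ((s p i : ℤ) : ℝ) ∂μ) = -(m i : ℝ) / ((k : ℝ) * (n : ℝ) ^ c) := by
  classical
  letI : MeasurableSpace (Tape d n k) := borel _
  haveI : BorelSpace (Tape d n k) := ⟨rfl⟩
  have hn0 : (0 : ℕ) < n := by omega
  set z₀ : Fin n := ⟨0, hn0⟩ with hz₀
  by_cases hm : m = 0
  · -- trivial machine
    subst hm
    set T : Head d n k → Head d n k :=
      mkTM d n k (∅ : Finset (Fin d → ℤ)) (fun xq => ((fun _ => z₀), xq.2, 0)) with hT
    have hTp : ∀ p : Head d n k, T p = p := by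
      rintro ⟨x, q, v⟩
      rw [hT]
      unfold mkTM
      refine Prod.ext ?_ (Prod.ext rfl (add_zero v))
      funext u
      simp [Finset.notMem_empty]
    have hTM : IsTM d n k T := mkTM_isTM d n k _ _ (fun _ _ _ _ => rfl)
    refine ⟨T, fun _ => (0 : Fin d → ℤ), ⟨hTM, T, hTM, ?_, ?_⟩, ⟨continuous_const, ∅, ?_⟩, ?_⟩
    · funext p
      simp [Function.comp_apply, hTp]
    · funext p
      simp [Function.comp_apply, hTp]
    · intro x q u _
      unfold Psi
      rw [hTp (x, q, 0)]
      simp [shiftC]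
    · intro i
      simp only [Pi.zero_apply, Int.cast_zero, integral_zero]
      norm_num
  · -- real machine
    set q₀ : Fin k := ⟨0, by omega⟩ with hq₀
    set T : Head d n k → Head d n k := mkTM d n k (FFs d c m) (ruleF d n k z₀ q₀ c m) with hT
    set T' : Head d n k → Head d n k := mkTM d n k (FFs d c m) (ruleB d n k z₀ q₀ c m) with hT'
    set s : Tape d n k → (Fin d → ℤ) :=
      fun p => if p.2 = q₀ ∧ eventF d n z₀ c m p.1 then -m else (0 : Fin d → ℤ) with hs
    have hRTM : IsRTM d n k T := by
      refine ⟨mkTM_isTM d n k _ _ (ruleF_local z₀ q₀ c m), T',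
        mkTM_isTM d n k _ _ (ruleB_local z₀ q₀ c m), ?_, ?_⟩
      · funext p
        exact TF_TB z₀ q₀ c m hm p
      · funext p
        exact TB_TF z₀ q₀ c m hm p
    have hInd : IsShiftIndicator d n k (Psi d n k T) s := by
      refine ⟨sF_continuous z₀ q₀ c m, FFs d c m, ?_⟩
      intro x q u hu
      unfold Psi
      by_cases hq : q = q₀
      · subst hq
        by_cases hev : eventF d n z₀ c m x
        · have hev0 : eventF d n z₀ c m (shiftC (-(0 : Fin d → ℤ)) x) := by
            rw [shiftC_negzero]; exact hev
          have hsv : s (x, q₀) = -m := by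
            rw [hs]; simp [hev]
          rw [hT]
          simp only []
          rw [TF_event z₀ q₀ c m x 0 hev0, hsv, zero_add]
        · have hev0 : ¬ eventF d n z₀ c m (shiftC (-(0 : Fin d → ℤ)) x) := by
            rw [shiftC_negzero]; exact hev
          have hsv : s (x, q₀) = 0 := by
            rw [hs]; simp [hev]
          rw [hT]
          simp only []
          rw [TF_rot z₀ q₀ c m hm x 0 hev0, hsv]
          obtain ⟨hp, hj, _, _⟩ := not_mem_FFs_cases c m hm hu
          simp only [shiftC, neg_zero, sub_zero]
          rw [if_neg hp, if_neg hj]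
      · have hsv : s (x, q) = 0 := by
          rw [hs]; simp [hq]
        rw [hT]
        simp only []
        rw [TF_other z₀ q₀ c m x q 0 hq, hsv]
        simp [shiftC]
    refine ⟨T, s, hRTM, hInd, ?_⟩
    intro i
    set C : Set (Tape d n k) :=
      {y : Tape d n k | (∀ u ∈ F1s d c m, y.1 u = (fun _ => z₀) u) ∧ y.2 = q₀} with hC
    have hCiff : ∀ p : Tape d n k, (p.2 = q₀ ∧ eventF d n z₀ c m p.1) ↔ p ∈ C := by
      intro p
      rw [hC]
      simp only [Set.mem_setOf_eq]
      constructor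
      · rintro ⟨h1, h2⟩
        refine ⟨fun u hu => ?_, h1⟩
        obtain ⟨l, hl1, hl2, rfl⟩ := mem_F1s.mp hu
        exact h2 l (Finset.mem_Icc.mpr ⟨hl1, hl2⟩)
      · rintro ⟨h1, h2⟩
        refine ⟨h2, fun l hl => ?_⟩
        rw [Finset.mem_Icc] at hl
        exact h1 _ (cm_mem_F1s hl.1 hl.2)
    have hint : (fun p : Tape d n k => ((s p i : ℤ) : ℝ))
        = C.indicator (fun _ => ((-(m i) : ℤ) : ℝ)) := by
      funext p
      rw [hs]
      simp only []
      by_cases hc : p.2 = q₀ ∧ eventF d n z₀ c m p.1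
      · rw [if_pos hc, Set.indicator_of_mem ((hCiff p).mp hc)]
        simp
      · rw [if_neg hc, Set.indicator_of_notMem (fun h => hc ((hCiff p).mpr h))]
        simp
    have hmeasC : MeasurableSet C :=
      (isOpen_cyl d n k (F1s d c m) (fun _ => z₀) q₀).measurableSet
    have hcard : (F1s d c m).card = c := by
      rw [F1s, Finset.card_image_of_injective _ (cm_inj hm), Nat.card_Icc]
      omega
    rw [hint, integral_indicator_const _ hmeasC, measureReal_def]
    rw [measure_toReal d n k hn hk μ hμ (F1s d c m) (fun _ => z₀) q₀, hcard]
    rw [smul_eq_mul]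
    push_cast
    have hkr : (k : ℝ) ≠ 0 := by positivity
    have hnr : (n : ℝ) ^ c ≠ 0 := by positivity
    rw [one_div, inv_mul_eq_div, mul_comm ((n : ℝ) ^ c) (k : ℝ)]

end Machine

lemma closure_D (d n k : ℕ) (hn : 2 ≤ n) (hk : 1 ≤ k) {w : Fin d → ℝ}
    (hw : w ∈ AddSubgroup.closure {w : Fin d → ℝ | ∃ (i : Fin d) (j : ℕ),
      w = Pi.single i (1 / ((k : ℝ) * (n : ℝ) ^ j))}) :
    ∃ (c : ℕ) (z : Fin d → ℤ), w = fun i => (z i : ℝ) / ((k : ℝ) * (n : ℝ) ^ c) := by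
  classical
  have hkr : (k : ℝ) ≠ 0 := by positivity
  have hnr : (n : ℝ) ≠ 0 := by positivity
  induction hw using AddSubgroup.closure_induction with
  | mem x hx =>
      obtain ⟨i, j, rfl⟩ := hx
      refine ⟨j, Pi.single i 1, ?_⟩
      funext i'
      rcases eq_or_ne i' i with h | h
      · subst h
        rw [Pi.single_eq_same, Pi.single_eq_same]
        norm_num
      · rw [Pi.single_eq_of_ne h, Pi.single_eq_of_ne h]
        norm_num
  | zero => exact ⟨0, 0, by funext i; simp⟩
  | add x y hx hy ihx ihy =>
      obtain ⟨c1, z1, rfl⟩ := ihx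
      obtain ⟨c2, z2, rfl⟩ := ihy
      refine ⟨c1 + c2, fun i => z1 i * (n : ℤ) ^ c2 + z2 i * (n : ℤ) ^ c1, ?_⟩
      funext i
      rw [Pi.add_apply]
      push_cast
      field_simp
      ring
  | neg x hx ihx =>
      obtain ⟨c1, z1, rfl⟩ := ihx
      refine ⟨c1, fun i => -(z1 i), ?_⟩
      funext i
      rw [Pi.neg_apply]
      push_cast
      ring

/-- The image of `RTM(ℤ^d,n,k)` under the average movement
homomorphism `α` (computed via `Ψ` and the uniform measure `μ`, values read in
`ℝ^d ⊇ ℚ^d`) is exactly the additive subgroup generated by the vectors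
`e_i / (k n^j)`, `j ∈ ℕ`, `1 ≤ i ≤ d`. -/
theorem averageMovement_image_RTM
    (d n k : ℕ) (hd : 1 ≤ d) (hn : 2 ≤ n) (hk : 1 ≤ k)
    (μ : @Measure (Tape d n k) (borel (Tape d n k)))
    (hμ : ∀ (F : Finset (Fin d → ℤ)) (p : (Fin d → ℤ) → Fin n) (q : Fin k),
        μ {y : Tape d n k | (∀ u ∈ F, y.1 u = p u) ∧ y.2 = q} =
          1 / ((n : ENNReal) ^ F.card * (k : ENNReal))) :
    {w : Fin d → ℝ | ∃ T : Head d n k → Head d n k, IsRTM d n k T ∧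
        ∃ s : Tape d n k → (Fin d → ℤ),
          IsShiftIndicator d n k (Psi d n k T) s ∧
          w = fun i => ∫ p, ((s p i : ℤ) : ℝ) ∂μ} =
      (AddSubgroup.closure
        {w : Fin d → ℝ | ∃ (i : Fin d) (j : ℕ),
          w = Pi.single i (1 / ((k : ℝ) * (n : ℝ) ^ j))} : Set (Fin d → ℝ)) := by
  ext w
  simp only [Set.mem_setOf_eq, SetLike.mem_coe]
  constructor
  · rintro ⟨T, hT, s, ⟨hcont, hF⟩, rfl⟩
    exact mem_closure_of_continuous d n k hn hk μ hμ s hcont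
  · intro hw
    obtain ⟨c, z, rfl⟩ := closure_D d n k hn hk hw
    obtain ⟨T, s, h1, h2, h3⟩ := exists_machine d n k hn hk μ hμ c (-z)
    refine ⟨T, h1, s, h2, ?_⟩
    funext i
    rw [h3 i, Pi.neg_apply]
    push_cast
    ring
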